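/- Let n ≥ 2 and let X : (ℝ³)ⁿ → (ℝ³)ⁿ be translation invariant (X(p₁+c,…,pₙ+c) = X(p₁,…,pₙ) for all c ∈ ℝ³) and homogeneous quadratic (X(t p) = t² X(p) for all t > 0). Let p ∈ (ℝ³)ⁿ satisfy τ(p) = p and ‖p‖ = 1, let λ > 0 and c ∈ ℝ³, and set p' := λ p + (c,…,c). Then D(π)_{p'}(Ψ(X(p'))) = D(π)_p(Ψ(X(p))), i.e. the Fréchet derivative of π at p' applied to Ψ(X(p')) equals the Fréchet derivative of π at p applied to Ψ(X(p)). -/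

import Mathlib

open scoped RealInnerProductSpace

noncomputable section

/-- Euclidean 3-space with the standard inner product. -/
abbrev E3 : Type := EuclideanSpace ℝ (Fin 3)

/-- The cross product on `ℝ³`. -/
def cross (a b : E3) : E3 :=
  WithLp.toLp 2 ![a 1 * b 2 - a 2 * b 1, a 2 * b 0 - a 0 * b 2, a 0 * b 1 - a 1 * b 0]

/-- `ν(a,b,c)` for a 3-cycle. -/
def nu3 (a b c : E3) : E3 := cross a b + cross b c + cross c a

/-- `ν(a,b,c,d)` for a 4-cycle. -/
def nu4 (a b c d : E3) : E3 := cross a b + cross b c + cross c d + cross d a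

/-- `ν(a,b,c,d,e)` for a 5-cycle. -/
def nu5 (a b c d e : E3) : E3 :=
  cross a b + cross b c + cross c d + cross d e + cross e a

/-- `ν(a,b,c,d,e,f)` for a 6-cycle. -/
def nu6 (a b c d e f : E3) : E3 :=
  cross a b + cross b c + cross c d + cross d e + cross e f + cross f a

/-- The signed volume of a tetrahedron. -/
def tvol (p₁ p₂ p₃ p₄ : E3) : ℝ :=
  (1 / 6) * ⟪cross (p₂ - p₁) (p₃ - p₁), p₄ - p₁⟫

/-- The point `(x, y, z)` of `ℝ³`. -/
def v3 (x y z : ℝ) : E3 := WithLp.toLp 2 ![x, y, z]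

/-- The translation-normalizing map `τ(p₁,…,pₙ) = (p₁ − pₙ, …, p_{n−1} − pₙ, 0)`. -/
def tauMap {n : ℕ} (p : PiLp 2 fun _ : Fin n => E3) : PiLp 2 fun _ : Fin n => E3 :=
  WithLp.toLp 2 fun i =>
    if (i : ℕ) = n - 1 then 0 else p i - p ⟨n - 1, Nat.sub_lt i.pos Nat.one_pos⟩

/-- The map `π = σ ∘ τ`, where `σ` is radial projection to the unit sphere. -/
def piMap {n : ℕ} (p : PiLp 2 fun _ : Fin n => E3) : PiLp 2 fun _ : Fin n => E3 :=
  ‖tauMap p‖⁻¹ • tauMap p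

open Classical in
/-- The normalization `Ψ(v) = v / √‖v‖` for `v ≠ 0`, `Ψ(0) = 0`. -/
def Psi {E : Type*} [NormedAddCommGroup E] [NormedSpace ℝ E] (v : E) : E :=
  if v = 0 then 0 else (Real.sqrt ‖v‖)⁻¹ • v

-- auxiliary lemmas

lemma tauMap_add_trans {n : ℕ} (q : PiLp 2 fun _ : Fin n => E3) (c : E3) :
    tauMap (q + (WithLp.equiv 2 (Fin n → E3)).symm (fun _ => c)) = tauMap q := by
  refine PiLp.ext fun i => ?_
  simp only [tauMap, PiLp.toLp_apply]
  split
  · rfl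
  · simp only [PiLp.add_apply, WithLp.equiv_symm_apply, PiLp.toLp_apply]
    abel

lemma tauMap_smul {n : ℕ} (t : ℝ) (q : PiLp 2 fun _ : Fin n => E3) :
    tauMap (t • q) = t • tauMap q := by
  refine PiLp.ext fun i => ?_
  show _ = t • (tauMap q i)
  simp only [tauMap, PiLp.toLp_apply]
  split
  · simp
  · simp [PiLp.smul_apply, smul_sub]

lemma piMap_add_trans {n : ℕ} (q : PiLp 2 fun _ : Fin n => E3) (c : E3) :
    piMap (q + (WithLp.equiv 2 (Fin n → E3)).symm (fun _ => c)) = piMap q := by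
  simp only [piMap, tauMap_add_trans]

lemma piMap_smul {n : ℕ} {t : ℝ} (ht : 0 < t) (q : PiLp 2 fun _ : Fin n => E3) :
    piMap (t • q) = piMap q := by
  simp only [piMap, tauMap_smul, norm_smul, Real.norm_eq_abs, abs_of_pos ht, mul_inv,
    smul_smul]
  rw [mul_comm, ← mul_assoc, mul_inv_cancel₀ ht.ne', one_mul]

lemma tauMap_linear {n : ℕ} : IsLinearMap ℝ (tauMap (n := n)) := by
  constructor
  · intro q r
    refine PiLp.ext fun i => ?_
    show _ = tauMap q i + tauMap r i
    simp only [tauMap, PiLp.toLp_apply]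
    split
    · simp
    · simp only [PiLp.add_apply]
      abel
  · intro t q; exact tauMap_smul t q

def tauCLM (n : ℕ) : (PiLp 2 fun _ : Fin n => E3) →L[ℝ] (PiLp 2 fun _ : Fin n => E3) :=
  ⟨IsLinearMap.mk' (tauMap (n := n)) tauMap_linear, by
    show Continuous (tauMap (n := n))
    unfold tauMap
    refine (PiLp.continuous_toLp 2 _).comp (continuous_pi fun i => ?_)
    split_ifs
    · exact continuous_const
    · exact (PiLp.continuous_apply 2 _ i).sub (PiLp.continuous_apply 2 _ _)⟩

lemma tauCLM_apply {n : ℕ} (q : PiLp 2 fun _ : Fin n => E3) : tauCLM n q = tauMap q := rfl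

lemma piMap_diff {n : ℕ} {q : PiLp 2 fun _ : Fin n => E3} (h : tauMap q ≠ 0) :
    DifferentiableAt ℝ (piMap (n := n)) q := by
  have hT : DifferentiableAt ℝ (fun r => tauMap (n := n) r) q :=
    (tauCLM n).differentiableAt
  have hTc : ContDiffAt ℝ 1 (fun r => tauMap (n := n) r) q :=
    ((tauCLM n).contDiff).contDiffAt
  have hnorm : DifferentiableAt ℝ (fun r => ‖tauMap (n := n) r‖) q :=
    (hTc.norm ℝ h).differentiableAt one_ne_zero
  exact (hnorm.inv (norm_ne_zero_iff.mpr h)).smul hT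

lemma Psi_sq_smul {E : Type*} [NormedAddCommGroup E] [NormedSpace ℝ E]
    {t : ℝ} (ht : 0 < t) (v : E) : Psi (t ^ 2 • v) = t • Psi v := by
  by_cases hv : v = 0
  · simp [hv, Psi]
  · have h2 : t ^ 2 • v ≠ 0 := smul_ne_zero (by positivity) hv
    have hnorm : ‖t ^ 2 • v‖ = t ^ 2 * ‖v‖ := by
      rw [norm_smul]; simp [abs_of_pos (by positivity : (0:ℝ) < t ^ 2)]
    have hsqrt : Real.sqrt ‖t ^ 2 • v‖ = t * Real.sqrt ‖v‖ := by
      rw [hnorm, Real.sqrt_mul (by positivity), Real.sqrt_sq ht.le]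
    have hs : Real.sqrt ‖v‖ ≠ 0 := by
      simpa using Real.sqrt_ne_zero'.mpr (norm_pos_iff.mpr hv)
    have ht0 : t ≠ 0 := ht.ne'
    simp only [Psi, if_neg hv, if_neg h2, hsqrt]
    rw [mul_inv, smul_smul, smul_smul]
    congr 1
    field_simp

instance instContinuousSMulPiLpE3 {n : ℕ} : ContinuousSMul ℝ (PiLp 2 fun _ : Fin n => E3) :=
  ⟨(PiLp.continuous_toLp 2 _).comp
    (continuous_fst.smul ((PiLp.continuous_ofLp 2 _).comp continuous_snd))⟩

instance instContinuousAddPiLpE3 {n : ℕ} : ContinuousAdd (PiLp 2 fun _ : Fin n => E3) :=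
  ⟨(PiLp.continuous_toLp 2 _).comp
    (((PiLp.continuous_ofLp 2 _).comp continuous_fst).add
      ((PiLp.continuous_ofLp 2 _).comp continuous_snd))⟩

theorem normalized_field_scale_translation_invariant (n : ℕ) (hn : 2 ≤ n)
    (X : (PiLp 2 fun _ : Fin n => E3) → PiLp 2 fun _ : Fin n => E3)
    (htrans : ∀ p (v : E3), X (p + (WithLp.equiv 2 (Fin n → E3)).symm (fun _ => v)) = X p)
    (hquad : ∀ (t : ℝ), 0 < t → ∀ p, X (t • p) = t ^ 2 • X p)
    (p : PiLp 2 fun _ : Fin n => E3) (hp : tauMap p = p) (hpnorm : ‖p‖ = 1)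
    (lam : ℝ) (hlam : 0 < lam) (c : E3)
    (p' : PiLp 2 fun _ : Fin n => E3) (hp' : p' = lam • p + (WithLp.equiv 2 (Fin n → E3)).symm (fun _ => c)) :
    fderiv ℝ (piMap (n := n)) p' (Psi (X p')) =
      fderiv ℝ (piMap (n := n)) p (Psi (X p)) := by
  subst hp'
  have hp0 : p ≠ 0 := by intro h; rw [h] at hpnorm; simp at hpnorm
  have hτp : tauMap p ≠ 0 := by rw [hp]; exact hp0
  have hτlp : tauMap (lam • p) ≠ 0 := by
    rw [tauMap_smul, hp]; exact smul_ne_zero hlam.ne' hp0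
  have hτp' : tauMap (lam • p + (WithLp.equiv 2 (Fin n → E3)).symm (fun _ => c)) ≠ 0 := by
    rw [tauMap_add_trans]; exact hτlp
  -- X p' = lam^2 • X p
  have hXp' : X (lam • p + (WithLp.equiv 2 (Fin n → E3)).symm (fun _ => c)) = lam ^ 2 • X p := by
    rw [htrans, hquad lam hlam]
  -- Step A : fderiv piMap (lam • p) = fderiv piMap p'
  have stepA : fderiv ℝ (piMap (n := n)) (lam • p) =
      fderiv ℝ (piMap (n := n)) (lam • p + (WithLp.equiv 2 (Fin n → E3)).symm (fun _ => c)) := by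
    have hshift : HasFDerivAt (fun q : PiLp 2 fun _ : Fin n => E3 =>
        q + (WithLp.equiv 2 (Fin n → E3)).symm (fun _ => c))
        (ContinuousLinearMap.id ℝ _) (lam • p) :=
      (hasFDerivAt_id _).add_const _
    have hcomp := ((piMap_diff hτp').hasFDerivAt.comp (lam • p) hshift)
    have heq : (fun q : PiLp 2 fun _ : Fin n => E3 =>
        piMap (q + (WithLp.equiv 2 (Fin n → E3)).symm (fun _ => c))) = piMap := by
      funext q; exact piMap_add_trans q c
    rw [Function.comp_def, heq] at hcomp
    rw [hcomp.fderiv]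
    ext v
    simp
  -- Step B : fderiv piMap p = (fderiv piMap (lam • p)) ∘ (lam • ·)
  have stepB : fderiv ℝ (piMap (n := n)) p =
      (fderiv ℝ (piMap (n := n)) (lam • p)).comp (lam • ContinuousLinearMap.id ℝ _) := by
    have hsc : HasFDerivAt (fun q : PiLp 2 fun _ : Fin n => E3 => lam • q)
        (lam • ContinuousLinearMap.id ℝ _) p := by
      exact (lam • ContinuousLinearMap.id ℝ (PiLp 2 fun _ : Fin n => E3)).hasFDerivAt (x := p)
    have hcomp := ((piMap_diff hτlp).hasFDerivAt.comp p hsc)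
    have heq : (fun q : PiLp 2 fun _ : Fin n => E3 => piMap (lam • q)) = piMap := by
      funext q; exact piMap_smul hlam q
    rw [Function.comp_def, heq] at hcomp
    exact hcomp.fderiv
  rw [← stepA, hXp', Psi_sq_smul hlam, stepB]
  simp [map_smul, smul_smul, inv_mul_cancel₀ hlam.ne']
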